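/- Let 0 < σ₀ < σ₁, μ₀ < μ₁, priors φ₀, φ₁ > 0 with φ₀ + φ₁ = 1, and assume the discriminant condition φ₀/φ₁ ≥ (σ₀/σ₁)·exp(−(μ₀−μ₁)²/(2(σ₁²−σ₀²))). Let t₊ be the larger root of the first-order condition. If additionally φ₀/φ₁ > Φ((t₊−μ₁)/σ₁)/Φ((t₊−μ₀)/σ₀), then t₊ is a global minimizer of R(t) = φ₀Φ((μ₀−t)/σ₀) + φ₁Φ((t−μ₁)/σ₁) over t ∈ ℝ ∪ {±∞}. -/

import Mathlib

open ProbabilityTheory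

/-- The standard normal cumulative distribution function Φ. -/
noncomputable def stdNormalCDF : ℝ → ℝ :=
  fun x => ProbabilityTheory.cdf (gaussianReal 0 1) x

open MeasureTheory Set Filter Real
open scoped Topology

lemma stdNormalCDF_eq_integral (x : ℝ) :
    stdNormalCDF x = ∫ t in Iic x, gaussianPDFReal 0 1 t := by
  rw [stdNormalCDF, cdf_eq_real, measureReal_def, gaussianReal_apply_eq_integral 0 one_ne_zero,
    ENNReal.toReal_ofReal]
  exact setIntegral_nonneg measurableSet_Iic fun t _ => gaussianPDFReal_nonneg 0 1 t

lemma continuous_stdpdf : Continuous (gaussianPDFReal 0 1) := by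
  rw [gaussianPDFReal_def]; fun_prop

lemma stdpdf_even (x : ℝ) : gaussianPDFReal 0 1 (-x) = gaussianPDFReal 0 1 x := by
  simp only [gaussianPDFReal]
  ring_nf

lemma stdpdf_eq (x : ℝ) :
    gaussianPDFReal 0 1 x = (Real.sqrt (2 * π))⁻¹ * Real.exp (-x ^ 2 / 2) := by
  simp [gaussianPDFReal]

lemma stdNormalCDF_neg (x : ℝ) : stdNormalCDF (-x) = 1 - stdNormalCDF x := by
  have h1 : stdNormalCDF x + ∫ t in Ioi x, gaussianPDFReal 0 1 t = 1 := by
    rw [stdNormalCDF_eq_integral,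
      intervalIntegral.integral_Iic_add_Ioi (integrable_gaussianPDFReal 0 1).integrableOn
        (integrable_gaussianPDFReal 0 1).integrableOn,
      integral_gaussianPDFReal_eq_one 0 one_ne_zero]
  have h2 : stdNormalCDF (-x) = ∫ t in Ioi x, gaussianPDFReal 0 1 t := by
    rw [stdNormalCDF_eq_integral]
    have := integral_comp_neg_Iic (-x) (gaussianPDFReal 0 1)
    simp only [stdpdf_even, neg_neg] at this
    rw [this]
  linarith

lemma hasDerivAt_stdNormalCDF (x : ℝ) :
    HasDerivAt stdNormalCDF (gaussianPDFReal 0 1 x) x := by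
  have key : ∀ y, stdNormalCDF y = stdNormalCDF 0 + ∫ t in (0:ℝ)..y, gaussianPDFReal 0 1 t := by
    intro y
    rw [← intervalIntegral.integral_Iic_sub_Iic (integrable_gaussianPDFReal 0 1).integrableOn
      (integrable_gaussianPDFReal 0 1).integrableOn, ← stdNormalCDF_eq_integral,
      ← stdNormalCDF_eq_integral]
    ring
  have h : HasDerivAt (fun y => stdNormalCDF 0 + ∫ t in (0:ℝ)..y, gaussianPDFReal 0 1 t)
      (gaussianPDFReal 0 1 x) x := by
    refine HasDerivAt.const_add _ ?_
    refine intervalIntegral.integral_hasDerivAt_right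
      (integrable_gaussianPDFReal 0 1).intervalIntegrable
      (continuous_stdpdf.stronglyMeasurable.stronglyMeasurableAtFilter)
      continuous_stdpdf.continuousAt
  exact h.congr_of_eventuallyEq (Filter.Eventually.of_forall key)

lemma stdNormalCDF_pos (x : ℝ) : 0 < stdNormalCDF x := by
  have h0 : (0:ℝ) ≤ stdNormalCDF (x - 1) := cdf_nonneg _ _
  have hsub : stdNormalCDF x - stdNormalCDF (x-1) = ∫ t in (x-1)..x, gaussianPDFReal 0 1 t := by
    rw [stdNormalCDF_eq_integral, stdNormalCDF_eq_integral]
    exact intervalIntegral.integral_Iic_sub_Iic (integrable_gaussianPDFReal 0 1).integrableOn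
      (integrable_gaussianPDFReal 0 1).integrableOn
  have hpos : 0 < ∫ t in (x-1)..x, gaussianPDFReal 0 1 t := by
    apply intervalIntegral.intervalIntegral_pos_of_pos
      (integrable_gaussianPDFReal 0 1).intervalIntegrable
      (fun t => gaussianPDFReal_pos 0 1 t one_ne_zero)
    linarith
  linarith

noncomputable def RR (μ₀ μ₁ σ₀ σ₁ φ₀ φ₁ t : ℝ) : ℝ :=
  φ₀ * stdNormalCDF ((μ₀ - t) / σ₀) + φ₁ * stdNormalCDF ((t - μ₁) / σ₁)


set_option maxHeartbeats 2000000 in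
/-- Let `0 < σ₀ < σ₁`, `μ₀ < μ₁`, priors `φ₀, φ₁ > 0` with `φ₀ + φ₁ = 1`, and assume the
discriminant condition `φ₀/φ₁ ≥ (σ₀/σ₁)·exp(−(μ₀−μ₁)²/(2(σ₁²−σ₀²)))`. Let `t₊` be the
larger root of the first-order condition. If additionally
`φ₀/φ₁ > Φ((t₊−μ₁)/σ₁)/Φ((t₊−μ₀)/σ₀)`, then `t₊` is a global minimizer of
`R(t) = φ₀Φ((μ₀−t)/σ₀) + φ₁Φ((t−μ₁)/σ₁)` over `ℝ ∪ {±∞}`, where `R(−∞) = φ₁` and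
`R(+∞) = φ₀`. -/
theorem stmt_7 (μ₀ μ₁ σ₀ σ₁ φ₀ φ₁ : ℝ)
    (hσ₀ : 0 < σ₀) (hσ : σ₀ < σ₁) (hμ : μ₀ < μ₁)
    (hφ₀ : 0 < φ₀) (hφ₁ : 0 < φ₁) (hsum : φ₀ + φ₁ = 1)
    (hdisc : φ₀ / φ₁ ≥ (σ₀ / σ₁) * Real.exp (-(μ₀ - μ₁) ^ 2 / (2 * (σ₁ ^ 2 - σ₀ ^ 2))))
    (tplus : ℝ)
    (htplus : tplus = (μ₀ * σ₁ ^ 2 - μ₁ * σ₀ ^ 2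
        + σ₀ * σ₁ * Real.sqrt ((μ₀ - μ₁) ^ 2
            + 2 * (σ₁ ^ 2 - σ₀ ^ 2) * Real.log (φ₀ * σ₁ / (φ₁ * σ₀))))
      / (σ₁ ^ 2 - σ₀ ^ 2))
    (hcond : φ₀ / φ₁ >
        stdNormalCDF ((tplus - μ₁) / σ₁) / stdNormalCDF ((tplus - μ₀) / σ₀)) :
    (∀ t : ℝ,
        φ₀ * stdNormalCDF ((μ₀ - tplus) / σ₀) + φ₁ * stdNormalCDF ((tplus - μ₁) / σ₁)
          ≤ φ₀ * stdNormalCDF ((μ₀ - t) / σ₀) + φ₁ * stdNormalCDF ((t - μ₁) / σ₁)) ∧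
    (φ₀ * stdNormalCDF ((μ₀ - tplus) / σ₀) + φ₁ * stdNormalCDF ((tplus - μ₁) / σ₁) ≤ φ₁) ∧
    (φ₀ * stdNormalCDF ((μ₀ - tplus) / σ₀) + φ₁ * stdNormalCDF ((tplus - μ₁) / σ₁) ≤ φ₀) := by
  have hσ₁ : 0 < σ₁ := hσ₀.trans hσ
  have hΔ : 0 < σ₁ ^ 2 - σ₀ ^ 2 := by nlinarith
  set Δ : ℝ := σ₁ ^ 2 - σ₀ ^ 2 with hΔdef
  set L : ℝ := Real.log (φ₀ * σ₁ / (φ₁ * σ₀)) with hLdef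
  set D : ℝ := (μ₀ - μ₁) ^ 2 + 2 * Δ * L with hDdef
  -- D ≥ 0
  have hratio : (0:ℝ) < φ₀ * σ₁ / (φ₁ * σ₀) := by positivity
  have hD : 0 ≤ D := by
    have hE : Real.exp (-(μ₀ - μ₁) ^ 2 / (2 * Δ)) ≤ φ₀ * σ₁ / (φ₁ * σ₀) := by
      rw [ge_iff_le, div_mul_eq_mul_div, div_le_div_iff₀ hσ₁ hφ₁] at hdisc
      rw [le_div_iff₀ (by positivity)]
      nlinarith
    have hlog : -(μ₀ - μ₁) ^ 2 / (2 * Δ) ≤ L := by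
      rw [hLdef, Real.le_log_iff_exp_le hratio]
      exact hE
    rw [div_le_iff₀ (by positivity)] at hlog
    rw [hDdef]; nlinarith
  set s : ℝ := Real.sqrt D with hsdef
  have hs0 : 0 ≤ s := Real.sqrt_nonneg D
  have hs2 : s ^ 2 = D := Real.sq_sqrt hD
  set tminus : ℝ := (μ₀ * σ₁ ^ 2 - μ₁ * σ₀ ^ 2 - σ₀ * σ₁ * s) / Δ with htmdef
  have htm_le : tminus ≤ tplus := by
    rw [htplus, htmdef]
    apply (div_le_div_iff_of_pos_right hΔ).mpr
    nlinarith [mul_nonneg (mul_nonneg hσ₀.le hσ₁.le) hs0]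
  clear_value Δ L D s tminus
  suffices main : (∀ t, RR μ₀ μ₁ σ₀ σ₁ φ₀ φ₁ tplus ≤ RR μ₀ μ₁ σ₀ σ₁ φ₀ φ₁ t) ∧
      RR μ₀ μ₁ σ₀ σ₁ φ₀ φ₁ tplus ≤ φ₁ ∧ RR μ₀ μ₁ σ₀ σ₁ φ₀ φ₁ tplus ≤ φ₀ by exact main
  set R : ℝ → ℝ := RR μ₀ μ₁ σ₀ σ₁ φ₀ φ₁ with hRdef
  have hRlam : R = fun t => φ₀ * stdNormalCDF ((μ₀ - t) / σ₀)
      + φ₁ * stdNormalCDF ((t - μ₁) / σ₁) := by rw [hRdef]; rfl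
  clear_value R
  set d : ℝ → ℝ := fun t => φ₀ * (gaussianPDFReal 0 1 ((μ₀ - t) / σ₀) * (-1 / σ₀))
      + φ₁ * (gaussianPDFReal 0 1 ((t - μ₁) / σ₁) * (1 / σ₁)) with hddef
  clear_value d
  -- derivative
  have hR : ∀ t, HasDerivAt R (d t) t := by
    intro t
    rw [hRlam, hddef]
    have h0 : HasDerivAt (fun t : ℝ => (μ₀ - t) / σ₀) (-1 / σ₀) t := by
      simpa using ((hasDerivAt_id t).const_sub μ₀).div_const σ₀
    have h1 : HasDerivAt (fun t : ℝ => (t - μ₁) / σ₁) (1 / σ₁) t :=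
      ((hasDerivAt_id t).sub_const μ₁).div_const σ₁
    have c0 := (hasDerivAt_stdNormalCDF ((μ₀ - t) / σ₀)).comp t h0
    have c1 := (hasDerivAt_stdNormalCDF ((t - μ₁) / σ₁)).comp t h1
    simp only [Function.comp_def] at c0 c1
    exact (c0.const_mul φ₀).add (c1.const_mul φ₁)
  have hsqrtpos : 0 < Real.sqrt (2 * π) := Real.sqrt_pos.2 (by positivity)
  set A₀ : ℝ → ℝ := fun t => Real.log (φ₀ / σ₀) - (t - μ₀) ^ 2 / (2 * σ₀ ^ 2) with hA0
  set A₁ : ℝ → ℝ := fun t => Real.log (φ₁ / σ₁) - (t - μ₁) ^ 2 / (2 * σ₁ ^ 2) with hA1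
  clear_value A₀ A₁
  have hdexp : ∀ t, d t = (Real.sqrt (2 * π))⁻¹ * (Real.exp (A₁ t) - Real.exp (A₀ t)) := by
    intro t
    have e0 : Real.exp (A₀ t) = φ₀ / σ₀ * Real.exp (-((μ₀ - t) / σ₀) ^ 2 / 2) := by
      have h : A₀ t = Real.log (φ₀ / σ₀) + -((μ₀ - t) / σ₀) ^ 2 / 2 := by
        rw [hA0]; field_simp; ring
      rw [h, Real.exp_add, Real.exp_log (by positivity)]
    have e1 : Real.exp (A₁ t) = φ₁ / σ₁ * Real.exp (-((t - μ₁) / σ₁) ^ 2 / 2) := by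
      have h : A₁ t = Real.log (φ₁ / σ₁) + -((t - μ₁) / σ₁) ^ 2 / 2 := by
        rw [hA1]; field_simp; ring
      rw [h, Real.exp_add, Real.exp_log (by positivity)]
    rw [hddef, e0, e1]
    simp only [stdpdf_eq]
    field_simp
    ring
  -- quadratic factorization
  have hL2 : L = (s ^ 2 - (μ₀ - μ₁) ^ 2) / (2 * Δ) := by
    rw [eq_div_iff (by positivity), hs2, hDdef]; ring
  have hlogdiff : Real.log (φ₀ / σ₀) - Real.log (φ₁ / σ₁) = L := by
    rw [hLdef, show φ₀ * σ₁ / (φ₁ * σ₀) = (φ₀ / σ₀) / (φ₁ / σ₁) by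
      rw [div_div_div_comm]; field_simp [hφ₁.ne', hσ₀.ne', hσ₁.ne']]
    exact (Real.log_div (by positivity) (by positivity)).symm
  have hfact : ∀ t, A₁ t - A₀ t = Δ * ((t - tminus) * (t - tplus)) / (2 * σ₀ ^ 2 * σ₁ ^ 2) := by
    intro t
    have h : A₁ t - A₀ t = -L - (t - μ₁) ^ 2 / (2 * σ₁ ^ 2) + (t - μ₀) ^ 2 / (2 * σ₀ ^ 2) := by
      simp only [hA0, hA1]; linarith [hlogdiff]
    have hΔne : σ₁ ^ 2 - σ₀ ^ 2 ≠ 0 := by nlinarith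
    rw [h, hL2, htplus, htmdef, hΔdef]
    field_simp [hΔne, hσ₀.ne', hσ₁.ne']
    ring
  -- sign of the derivative
  have hd_nonneg : ∀ t, 0 ≤ (t - tminus) * (t - tplus) → 0 ≤ d t := by
    intro t ht
    rw [hdexp t]
    have hle : A₀ t ≤ A₁ t := by
      have h2 : 0 ≤ Δ * ((t - tminus) * (t - tplus)) / (2 * σ₀ ^ 2 * σ₁ ^ 2) :=
        div_nonneg (mul_nonneg hΔ.le ht) (by positivity)
      exact sub_nonneg.mp (by rw [hfact t]; exact h2)
    have h3 : 0 ≤ Real.exp (A₁ t) - Real.exp (A₀ t) := by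
      have := Real.exp_le_exp.mpr hle; linarith
    exact mul_nonneg (inv_nonneg.2 hsqrtpos.le) h3
  have hd_nonpos : ∀ t, (t - tminus) * (t - tplus) ≤ 0 → d t ≤ 0 := by
    intro t ht
    rw [hdexp t]
    have hle : A₁ t ≤ A₀ t := by
      have h2 : Δ * ((t - tminus) * (t - tplus)) / (2 * σ₀ ^ 2 * σ₁ ^ 2) ≤ 0 :=
        div_nonpos_of_nonpos_of_nonneg (mul_nonpos_of_nonneg_of_nonpos hΔ.le ht) (by positivity)
      exact sub_nonpos.mp (by rw [hfact t]; exact h2)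
    have h3 : Real.exp (A₁ t) - Real.exp (A₀ t) ≤ 0 := by
      have := Real.exp_le_exp.mpr hle; linarith
    exact mul_nonpos_of_nonneg_of_nonpos (inv_nonneg.2 hsqrtpos.le) h3
  -- monotonicity
  have hRdiff : Differentiable ℝ R := fun t => (hR t).differentiableAt
  have hRderiv : ∀ t, deriv R t = d t := fun t => (hR t).deriv
  have hmono_Ici : MonotoneOn R (Ici tplus) := by
    apply monotoneOn_of_deriv_nonneg (convex_Ici tplus) hRdiff.continuous.continuousOn
      (fun x _ => (hRdiff x).differentiableWithinAt)
    intro x hx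
    rw [interior_Ici] at hx
    rw [hRderiv]
    have h1 : tplus < x := hx
    exact hd_nonneg x (mul_nonneg (by linarith) (by linarith))
  have hmono_Iic : MonotoneOn R (Iic tminus) := by
    apply monotoneOn_of_deriv_nonneg (convex_Iic tminus) hRdiff.continuous.continuousOn
      (fun x _ => (hRdiff x).differentiableWithinAt)
    intro x hx
    rw [interior_Iic] at hx
    rw [hRderiv]
    have h1 : x < tminus := hx
    exact hd_nonneg x (mul_nonneg_iff.mpr (Or.inr ⟨by linarith, by linarith⟩))
  have hanti : AntitoneOn R (Icc tminus tplus) := by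
    apply antitoneOn_of_deriv_nonpos (convex_Icc tminus tplus) hRdiff.continuous.continuousOn
      (fun x _ => (hRdiff x).differentiableWithinAt)
    intro x hx
    rw [interior_Icc] at hx
    rw [hRderiv]
    exact hd_nonpos x (mul_nonpos_iff.mpr (Or.inl ⟨by linarith [hx.1], by linarith [hx.2]⟩))
  -- limits
  have hTop : Tendsto R atTop (𝓝 φ₁) := by
    have l0 : Tendsto (fun t : ℝ => (μ₀ - t) / σ₀) atTop atBot := by
      apply Tendsto.atBot_div_const hσ₀
      exact (tendsto_atBot_add_const_left atTop μ₀
        (tendsto_neg_atTop_atBot (G := ℝ))).congr fun t => (sub_eq_add_neg μ₀ t).symm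
    have l1 : Tendsto (fun t : ℝ => (t - μ₁) / σ₁) atTop atTop := by
      apply Tendsto.atTop_div_const hσ₁
      exact tendsto_atTop_add_const_right atTop (-μ₁) tendsto_id
    have c0 : Tendsto (fun t => stdNormalCDF ((μ₀ - t) / σ₀)) atTop (𝓝 0) :=
      (tendsto_cdf_atBot (gaussianReal 0 1)).comp l0
    have c1 : Tendsto (fun t => stdNormalCDF ((t - μ₁) / σ₁)) atTop (𝓝 1) :=
      (tendsto_cdf_atTop (gaussianReal 0 1)).comp l1
    have := (c0.const_mul φ₀).add (c1.const_mul φ₁)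
    rw [hRlam]
    simpa using this
  have hBot : Tendsto R atBot (𝓝 φ₀) := by
    have l0 : Tendsto (fun t : ℝ => (μ₀ - t) / σ₀) atBot atTop := by
      apply Tendsto.atTop_div_const hσ₀
      exact (tendsto_atTop_add_const_left atBot μ₀
        (tendsto_neg_atBot_atTop (G := ℝ))).congr fun t => (sub_eq_add_neg μ₀ t).symm
    have l1 : Tendsto (fun t : ℝ => (t - μ₁) / σ₁) atBot atBot := by
      apply Tendsto.atBot_div_const hσ₁
      exact tendsto_atBot_add_const_right atBot (-μ₁) tendsto_id
    have c0 : Tendsto (fun t => stdNormalCDF ((μ₀ - t) / σ₀)) atBot (𝓝 1) :=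
      (tendsto_cdf_atTop (gaussianReal 0 1)).comp l0
    have c1 : Tendsto (fun t => stdNormalCDF ((t - μ₁) / σ₁)) atBot (𝓝 0) :=
      (tendsto_cdf_atBot (gaussianReal 0 1)).comp l1
    have := (c0.const_mul φ₀).add (c1.const_mul φ₁)
    rw [hRlam]
    simpa using this
  -- conclusion 3 from hcond
  have hc3 : R tplus ≤ φ₀ := by
    have hpos0 := stdNormalCDF_pos ((tplus - μ₀) / σ₀)
    have hle1 := cdf_le_one (gaussianReal 0 1) ((tplus - μ₀) / σ₀)
    rw [gt_iff_lt, div_lt_div_iff₀ hpos0 hφ₁] at hcond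
    have hneg : (μ₀ - tplus) / σ₀ = -((tplus - μ₀) / σ₀) := by ring
    rw [hRdef]
    simp only [RR]
    rw [hneg, stdNormalCDF_neg]
    nlinarith [hcond]
  -- conclusion 2 from monotonicity on [tplus, ∞) and the limit at +∞
  have hc2 : R tplus ≤ φ₁ := by
    refine ge_of_tendsto hTop ?_
    exact eventually_atTop.2 ⟨tplus, fun t ht => hmono_Ici self_mem_Ici ht ht⟩
  -- conclusion 1
  have hc1 : ∀ t, R tplus ≤ R t := by
    intro t
    rcases le_or_gt tminus t with h1 | h1
    · rcases le_or_gt t tplus with h2 | h2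
      · exact hanti ⟨h1, h2⟩ ⟨htm_le, le_rfl⟩ h2
      · exact hmono_Ici self_mem_Ici h2.le h2.le
    · have hphi0 : φ₀ ≤ R t := by
        refine le_of_tendsto hBot ?_
        exact eventually_atBot.2 ⟨t, fun u hu =>
          hmono_Iic (hu.trans h1.le : u ∈ Iic tminus) h1.le hu⟩
      exact hc3.trans hphi0
  exact ⟨hc1, hc2, hc3⟩
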